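/- Let R be a finite local ring with maximal ideal M of order m. The adjacency matrix of the unitary Cayley graph G_R has eigenvalues |R| − m (with multiplicity 1), −m (with multiplicity |R|/m − 1), and 0 (with multiplicity (|R|/m)(m − 1)). -/

import Mathlib

open Polynomial

open Polynomial

/-- The unitary Cayley graph of a finite commutative ring `R`. -/
def unitaryCayley (R : Type*) [CommRing R] [Fintype R] [DecidableEq R] : SimpleGraph R where
  Adj x y := x ≠ y ∧ IsUnit (x - y)
  symm := by
    refine ⟨fun x y h => ?_⟩
    exact ⟨h.1.symm, by simpa using h.2.neg⟩
  loopless := ⟨fun x h => h.1 rfl⟩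

instance unitaryCayley.instDecidableRel (R : Type*) [CommRing R] [Fintype R] [DecidableEq R] :
    DecidableRel (unitaryCayley R).Adj := fun a b =>
  decidable_of_iff (a ≠ b ∧ ∃ c, (a - b) * c = 1)
    (and_congr Iff.rfl isUnit_iff_exists_inv.symm)

/-- An `r`-regular graph is Ramanujan if every adjacency eigenvalue other than `±r`
has absolute value at most `2 * sqrt (r - 1)`. -/
def IsRamanujan {V : Type*} [Fintype V] [DecidableEq V] (G : SimpleGraph V)
    [DecidableRel G.Adj] (r : ℕ) : Prop :=
  ∀ μ ∈ (SimpleGraph.adjMatrix ℝ G).charpoly.roots,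
    |μ| ≠ (r : ℝ) → |μ| ≤ 2 * Real.sqrt ((r : ℝ) - 1)

/-- The energy of a graph: the sum of absolute values of its adjacency eigenvalues. -/
noncomputable def graphEnergy {V : Type*} [Fintype V] [DecidableEq V] (G : SimpleGraph V)
    [DecidableRel G.Adj] : ℝ :=
  ((SimpleGraph.adjMatrix ℝ G).charpoly.roots.map (fun μ => |μ|)).sum

open Matrix in
lemma charpoly_conj' {n : Type*} [Fintype n] [DecidableEq n] {K : Type*} [CommRing K]
    (U D V : Matrix n n K) (hUV : U * V = 1) (hVU : V * U = 1) :
    (U * D * V).charpoly = D.charpoly := by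
  have hmapUV : U.map (C : K →+* K[X]) * V.map C = 1 := by
    rw [← Matrix.map_mul, hUV]; simp
  have hmapVU : V.map (C : K →+* K[X]) * U.map C = 1 := by
    rw [← Matrix.map_mul, hVU]; simp
  have h1 : charmatrix (U * D * V) = U.map C * charmatrix D * V.map C := by
    unfold charmatrix
    simp only [RingHom.mapMatrix_apply]
    rw [Matrix.map_mul, Matrix.map_mul, mul_sub, sub_mul]
    congr 1
    · symm
      rw [mul_assoc, (Matrix.scalar_commute (X : K[X]) (fun r' => Commute.all _ _) (V.map C)).eq,
        ← mul_assoc, hmapUV, one_mul]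
  rw [Matrix.charpoly, h1, det_mul, det_mul, mul_comm, ← mul_assoc, ← det_mul, hmapVU]
  simp [Matrix.charpoly]

open Matrix in
lemma charpoly_diag' {n : Type*} [Fintype n] [DecidableEq n] {K : Type*} [CommRing K]
    (d : n → K) : (Matrix.diagonal d).charpoly = ∏ i, (X - C (d i)) := by
  have : charmatrix (Matrix.diagonal d) = Matrix.diagonal (fun i => X - C (d i)) := by
    ext i j
    by_cases h : i = j
    · subst h; simp
    · simp [charmatrix_apply_ne _ _ _ h, Matrix.diagonal_apply_ne _ h,
        Matrix.diagonal_apply_ne' _ h]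
  rw [Matrix.charpoly, this, det_diagonal]

set_option maxHeartbeats 2000000 in
open Matrix in
open scoped Classical in
/-- For a finite local ring `R` with maximal ideal `M` of order `m`, the characteristic
polynomial of the adjacency matrix of `G_R` is
`(X - (|R| - m)) * (X + m)^(|R|/m - 1) * X^((|R|/m)(m-1))`, i.e. the eigenvalues are
`|R| - m` (multiplicity 1), `-m` (multiplicity `|R|/m - 1`) and `0`
(multiplicity `(|R|/m)(m-1)`). -/
theorem stmt_6 (R : Type*) [CommRing R] [IsLocalRing R] [Fintype R] [DecidableEq R]
    (M : Ideal R) (hM : M.IsMaximal) (m : ℕ) (hm : m = Nat.card M) :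
    (SimpleGraph.adjMatrix ℝ (unitaryCayley R)).charpoly =
      (X - C ((Fintype.card R : ℝ) - m)) * (X + C (m : ℝ)) ^ (Fintype.card R / m - 1) *
        X ^ ((Fintype.card R / m) * (m - 1)) := by
  classical
  have hMmax : M = IsLocalRing.maximalIdeal R := IsLocalRing.eq_maximalIdeal hM
  have hMu : ∀ x : R, x ∈ M ↔ ¬ IsUnit x := by
    intro x; rw [hMmax]; exact IsLocalRing.mem_maximalIdeal x
  set n := Fintype.card R with hn
  -- card of each "coset fiber"
  have cardfix : ∀ x : R, (Finset.univ.filter (fun y => x - y ∈ M)).card = m := by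
    intro x
    rw [hm]
    rw [← Fintype.card_subtype]
    rw [Nat.card_eq_fintype_card]
    apply Fintype.card_congr
    exact ⟨fun y => ⟨x - y.1, y.2⟩, fun z => ⟨x - z.1, by simp⟩,
      fun y => by simp, fun z => by simp⟩
  have hm1 : 1 ≤ m := by
    rw [← cardfix 0]
    apply Finset.card_pos.mpr
    exact ⟨0, by simp [M.zero_mem]⟩
  have hone : (1:R) ∉ M := fun h => (hMu 1).mp h isUnit_one
  have h2m : 2 * m ≤ n := by
    have hdisj : Disjoint (Finset.univ.filter (fun y => (0:R) - y ∈ M))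
        (Finset.univ.filter (fun y => (1:R) - y ∈ M)) := by
      rw [Finset.disjoint_filter]
      intro y _ h0 h1
      exact hone (by simpa using M.sub_mem h1 h0)
    have hcu := Finset.card_union_of_disjoint hdisj
    have hle : (Finset.univ.filter (fun y => (0:R) - y ∈ M) ∪
        Finset.univ.filter (fun y => (1:R) - y ∈ M)).card ≤ n := by
      rw [hn]; exact Finset.card_le_univ _
    rw [hcu, cardfix 0, cardfix 1] at hle
    omega
  have hmdvd : m ∣ n := by
    rw [hm, hn, ← Nat.card_eq_fintype_card]
    have := AddSubgroup.card_addSubgroup_dvd_card (M.toAddSubgroup)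
    simpa using this
  set k := n / m with hk
  have hkm : m * k = n := Nat.mul_div_cancel' hmdvd
  -- the matrices
  set A := SimpleGraph.adjMatrix ℝ (unitaryCayley R) with hA
  set J : Matrix R R ℝ := Matrix.of (fun _ _ => (1:ℝ)) with hJ
  set B : Matrix R R ℝ := Matrix.of (fun x y => if x - y ∈ M then (1:ℝ) else 0) with hB
  have hAJB : A = J - B := by
    ext x y
    simp only [hA, SimpleGraph.adjMatrix_apply, hJ, hB, Matrix.sub_apply, Matrix.of_apply]
    by_cases h : x - y ∈ M
    · rw [if_pos h, if_neg]
      · norm_num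
      · rintro ⟨-, hu⟩; exact (hMu _).mp h hu
    · rw [if_neg h, if_pos]
      · norm_num
      · have hu : IsUnit (x - y) := by by_contra hc; exact h ((hMu _).mpr hc)
        refine ⟨?_, hu⟩
        intro he; rw [he, sub_self] at hu; exact hu.ne_zero rfl
  have hsum : ∀ x : R, (∑ y, (if x - y ∈ M then (1:ℝ) else 0)) = (m:ℝ) := by
    intro x
    rw [Finset.sum_boole]
    rw [cardfix x]
  have hJJ : J * J = (n:ℝ) • J := by
    ext x y
    simp only [hJ, Matrix.mul_apply, Matrix.of_apply, one_mul, Matrix.smul_apply,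
      smul_eq_mul, mul_one, Finset.sum_const, Finset.card_univ, nsmul_eq_mul]
    rfl
  have hJB : J * B = (m:ℝ) • J := by
    ext x y
    simp only [hJ, hB, Matrix.mul_apply, Matrix.of_apply, Matrix.smul_apply, one_mul,
      smul_eq_mul, mul_one]
    rw [← hsum y]
    apply Finset.sum_congr rfl
    intro z _
    congr 1
    exact propext ⟨fun h => by simpa using M.neg_mem h, fun h => by simpa using M.neg_mem h⟩
  have hBJ : B * J = (m:ℝ) • J := by
    ext x y
    simp only [hJ, hB, Matrix.mul_apply, Matrix.of_apply, Matrix.smul_apply, mul_one,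
      smul_eq_mul]
    rw [hsum x]
  have hBB : B * B = (m:ℝ) • B := by
    ext x y
    simp only [hB, Matrix.mul_apply, Matrix.of_apply, Matrix.smul_apply, smul_eq_mul]
    by_cases h : x - y ∈ M
    · rw [if_pos h, mul_one]
      rw [← hsum x]
      apply Finset.sum_congr rfl
      intro z _
      by_cases hz : x - z ∈ M
      · have : z - y ∈ M := by
          have := M.sub_mem h hz
          simpa [sub_sub_sub_cancel_left] using this
        simp [hz, this]
      · simp [hz]
    · rw [if_neg h, mul_zero]
      apply Finset.sum_eq_zero
      intro z _
      by_cases hz : x - z ∈ M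
      · have hz2 : z - y ∉ M := by
          intro hzy
          exact h (by simpa [sub_add_sub_cancel] using M.add_mem hz hzy)
        simp [hz2]
      · simp [hz]
  -- hermitian
  have hherm : A.IsHermitian := by
    have h := SimpleGraph.isSymm_adjMatrix (α := ℝ) (G := unitaryCayley R)
    rw [Matrix.IsHermitian]
    ext i j
    rw [Matrix.conjTranspose_apply, star_trivial]
    exact h.apply i j
  -- algebraic identities
  have hA2 : A * A + (m:ℝ) • A = ((n:ℝ) - m) • J := by
    rw [hAJB]
    rw [sub_mul, mul_sub, mul_sub, hJJ, hJB, hBJ, hBB]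
    rw [smul_sub]
    module
  have hJA : J * A = ((n:ℝ) - m) • J := by
    rw [hAJB, mul_sub, hJJ, hJB]
    module
  have hTriple : (A * A + (m:ℝ) • A) * (A - ((n:ℝ) - m) • 1) = 0 := by
    rw [hA2, smul_mul_assoc, mul_sub, hJA, mul_smul_comm, mul_one]
    simp
  -- eigenvalues are roots
  set ev : R → ℝ := hherm.eigenvalues with hev
  have hroot : ∀ i : R, ev i = 0 ∨ ev i = -(m:ℝ) ∨ ev i = (n:ℝ) - m := by
    intro i
    set v : R → ℝ := ⇑(hherm.eigenvectorBasis i) with hv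
    have hvnz : v ≠ 0 := fun h => hherm.eigenvectorBasis.orthonormal.ne_zero i (by ext j; exact congrFun h j)
    have hAv : A *ᵥ v = ev i • v := hherm.mulVec_eigenvectorBasis i
    have h0 : ((A * A + (m:ℝ) • A) * (A - ((n:ℝ) - m) • 1)) *ᵥ v = 0 := by
      rw [hTriple, Matrix.zero_mulVec]
    rw [← Matrix.mulVec_mulVec] at h0
    have h1 : (A - ((n:ℝ) - m) • 1) *ᵥ v = (ev i - ((n:ℝ) - m)) • v := by
      rw [Matrix.sub_mulVec, hAv, Matrix.smul_mulVec, Matrix.one_mulVec]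
      module
    rw [h1] at h0
    have h15 : (A * A + (m:ℝ) • A) *ᵥ v = (ev i * ev i + m * ev i) • v := by
      rw [Matrix.add_mulVec, ← Matrix.mulVec_mulVec, hAv, Matrix.mulVec_smul, hAv,
        Matrix.smul_mulVec, hAv]
      module
    rw [Matrix.mulVec_smul, h15, smul_smul] at h0
    have h2 : ((ev i - ((n:ℝ) - m)) * (ev i * ev i + m * ev i)) • v = 0 := h0
    rcases smul_eq_zero.mp h2 with h | h
    · rcases mul_eq_zero.mp h with h | h
      · right; right; linarith [sub_eq_zero.mp h]
      · rcases mul_eq_zero.mp (show ev i * (ev i + m) = 0 by nlinarith [h]) with h' | h'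
        · left; exact h'
        · right; left; linarith
    · exact absurd h hvnz
  -- spectral decomposition
  set U : Matrix R R ℝ := (hherm.eigenvectorUnitary : Matrix R R ℝ) with hU
  have hUV : U * star U = 1 := Matrix.mem_unitaryGroup_iff.mp hherm.eigenvectorUnitary.2
  have hVU : star U * U = 1 := Matrix.mem_unitaryGroup_iff'.mp hherm.eigenvectorUnitary.2
  have hspec : A = U * Matrix.diagonal ev * star U := by
    have := hherm.spectral_theorem
    rwa [RCLike.ofReal_real_eq_id, Function.id_comp] at this
  have hchar : A.charpoly = ∏ i, (X - C (ev i)) := by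
    rw [hspec, charpoly_conj' _ _ _ hUV hVU, charpoly_diag']
  have htrace1 : Matrix.trace A = ∑ i, ev i := by
    conv_lhs => rw [hspec]
    rw [Matrix.trace_mul_comm, ← mul_assoc, hVU, one_mul, Matrix.trace_diagonal]
  have htrace2 : Matrix.trace (A * A) = ∑ i, ev i * ev i := by
    have hAA : A * A = U * (Matrix.diagonal ev * Matrix.diagonal ev) * star U := by
      conv_lhs => rw [hspec]
      have h1 : star U * (U * (Matrix.diagonal ev * star U)) = Matrix.diagonal ev * star U := by
        rw [← mul_assoc, hVU, one_mul]
      simp only [mul_assoc]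
      rw [h1]
    rw [hAA, Matrix.trace_mul_comm, ← mul_assoc, hVU, one_mul,
      Matrix.diagonal_mul_diagonal, Matrix.trace_diagonal]
  -- degrees and traces
  have hdeg : ∀ x : R, (unitaryCayley R).degree x = n - m := by
    intro x
    rw [← SimpleGraph.card_neighborFinset_eq_degree]
    have hns : (unitaryCayley R).neighborFinset x = Finset.univ.filter (fun y => ¬ (x - y ∈ M)) := by
      ext y
      simp only [SimpleGraph.mem_neighborFinset, Finset.mem_filter, Finset.mem_univ, true_and]
      constructor
      · rintro ⟨hne, hu⟩ hmem
        exact (hMu _).mp hmem hu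
      · intro h
        have hu : IsUnit (x - y) := by by_contra hc; exact h ((hMu _).mpr hc)
        refine ⟨?_, hu⟩
        intro he; rw [he, sub_self] at hu; exact hu.ne_zero rfl
    rw [hns]
    have h1 := Finset.card_filter_add_card_filter_not (s := (Finset.univ : Finset R))
      (fun y => x - y ∈ M)
    rw [cardfix x, Finset.card_univ, ← hn] at h1
    omega
  have htr : ∑ i, ev i = 0 := by
    rw [← htrace1, hA]
    exact SimpleGraph.trace_adjMatrix _ _
  have htr2 : ∑ i, ev i * ev i = (n:ℝ) * ((n:ℝ) - m) := by
    rw [← htrace2, Matrix.trace]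
    have hdd : ∀ x : R, (A * A).diag x = ((n - m : ℕ) : ℝ) := by
      intro x
      rw [Matrix.diag_apply, hA, SimpleGraph.adjMatrix_mul_self_apply_self, hdeg x]
    rw [Finset.sum_congr rfl (fun x _ => hdd x), Finset.sum_const, Finset.card_univ, ← hn,
      nsmul_eq_mul, Nat.cast_sub (by omega : m ≤ n)]
  -- final counting
  rw [hchar]
  set r : ℝ := (n:ℝ) - m with hr
  have hmn : (2*m : ℝ) ≤ (n:ℝ) := by exact_mod_cast h2m
  have hmR : (1:ℝ) ≤ (m:ℝ) := by exact_mod_cast hm1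
  have hrpos : 0 < r := by rw [hr]; push_cast at hmn ⊢; linarith
  have hrne : r ≠ -(m:ℝ) := by intro h; rw [h] at hrpos; linarith
  have hrne0 : r ≠ 0 := ne_of_gt hrpos
  have hmne0 : -(m:ℝ) ≠ 0 := by intro h; push_cast at h; linarith
  set p : R → Prop := fun i => ev i = r with hp
  set q : R → Prop := fun i => ev i = -(m:ℝ) with hq
  set c := (Finset.univ.filter p).card with hc
  set b := ((Finset.univ.filter (fun i => ¬ p i)).filter q).card with hb
  set a := ((Finset.univ.filter (fun i => ¬ p i)).filter (fun i => ¬ q i)).card with ha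
  have hcount1 : c + (Finset.univ.filter (fun i => ¬ p i)).card = n := by
    rw [hn, ← Finset.card_univ]
    exact Finset.card_filter_add_card_filter_not p
  have hcount2 : b + a = (Finset.univ.filter (fun i => ¬ p i)).card := by
    exact Finset.card_filter_add_card_filter_not q
  have hsum1 : ∑ i, ev i = c * r + (b * (-(m:ℝ)) + a * 0) := by
    have hterm : ∀ i : R, ev i = if p i then r else if q i then -(m:ℝ) else 0 := by
      intro i
      rcases hroot i with h | h | h
      · rw [if_neg, if_neg]
        · exact h
        · rw [hq]; simp only [h]; exact fun hh => hmne0 hh.symm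
        · rw [hp]; simp only [h]; exact fun hh => hrne0 hh.symm
      · rw [if_neg, if_pos]
        · exact h
        · exact h
        · rw [hp]; simp only [h]; intro hh; exact hrne hh.symm
      · rw [if_pos h]; exact h
    rw [Finset.sum_congr rfl (fun i _ => hterm i), Finset.sum_ite, Finset.sum_ite,
      Finset.sum_const, Finset.sum_const, Finset.sum_const]
    push_cast
    ring
  have hsum2 : ∑ i, ev i * ev i = c * (r*r) + (b * ((m:ℝ)*m) + a * 0) := by
    have hterm : ∀ i : R, ev i * ev i = if p i then r*r else if q i then (m:ℝ)*m else 0 := by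
      intro i
      rcases hroot i with h | h | h
      · rw [if_neg, if_neg]
        · rw [h]; ring
        · rw [hq]; simp only [h]; exact fun hh => hmne0 hh.symm
        · rw [hp]; simp only [h]; exact fun hh => hrne0 hh.symm
      · rw [if_neg, if_pos]
        · rw [h]; ring
        · exact h
        · rw [hp]; simp only [h]; intro hh; exact hrne hh.symm
      · rw [if_pos h, h]
    rw [Finset.sum_congr rfl (fun i _ => hterm i), Finset.sum_ite, Finset.sum_ite,
      Finset.sum_const, Finset.sum_const, Finset.sum_const]
    push_cast
    ring
  rw [htr] at hsum1
  rw [htr2] at hsum2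
  have hnr : (n:ℝ) = r + m := by rw [hr]; ring
  have hceq : (c:ℝ) = 1 := by
    have e1 : (c:ℝ) * r = (b:ℝ) * m := by linarith [hsum1]
    have e2 : (c:ℝ) * (r*r) + (b:ℝ) * (m*m) = (n:ℝ) * r := by linarith [hsum2]
    have e3 : (c:ℝ) * r * (r + m) = (n:ℝ) * r := by nlinarith [e1, e2]
    rw [← hnr] at e3
    have hnpos : (0:ℝ) < n := by rw [hnr]; positivity
    have h3 : (c:ℝ) * r * n = 1 * r * n := by rw [e3]; ring
    have h4 : (c:ℝ) * r = 1 * r := mul_right_cancel₀ (ne_of_gt hnpos) h3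
    exact mul_right_cancel₀ hrne0 h4
  have hcnat : c = 1 := by exact_mod_cast hceq
  have hk2 : 2 ≤ k := by by_contra h; push_neg at h; interval_cases k <;> omega
  have hbnat : b = k - 1 := by
    have e1 : (c:ℝ) * r = (b:ℝ) * m := by linarith [hsum1]
    rw [hceq, one_mul] at e1
    have hkr : ((k - 1 : ℕ):ℝ) * m = r := by
      rw [Nat.cast_sub (by omega : 1 ≤ k)]
      have hmk : (m:ℝ) * k = n := by exact_mod_cast hkm
      push_cast
      rw [hr]
      ring_nf
      ring_nf at hmk
      linarith [hmk]
    have hbm : (b:ℝ) * m = ((k-1:ℕ):ℝ) * m := by rw [hkr, ← e1]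
    have hb2 : (b:ℝ) = ((k-1:ℕ):ℝ) := mul_right_cancel₀ (by positivity : (0:ℝ) < (m:ℝ)).ne' hbm
    exact_mod_cast hb2
  have hanat : a = k * (m - 1) := by
    have hkm1 : k * (m-1) = n - k := by
      cases' Nat.exists_eq_add_of_le hm1 with m' hm'
      subst hm'
      rw [← hkm, show 1 + m' - 1 = m' from by omega]
      ring_nf
      omega
    omega
  rw [show (∏ i : R, (X - C (ev i))) = ∏ i : R, (if p i then X - C r else if q i then X + C (m:ℝ) else X) from ?_]
  · rw [Finset.prod_ite, Finset.prod_ite, Finset.prod_const, Finset.prod_const,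
      Finset.prod_const, ← hc, ← hb, ← ha, hcnat, hbnat, hanat, pow_one, mul_assoc]
  · apply Finset.prod_congr rfl
    intro i _
    rcases hroot i with h | h | h
    · rw [if_neg, if_neg]
      · rw [h, map_zero, sub_zero]
      · rw [hq]; simp only [h]; exact fun hh => hmne0 hh.symm
      · rw [hp]; simp only [h]; exact fun hh => hrne0 hh.symm
    · rw [if_neg, if_pos]
      · rw [h, map_neg, sub_neg_eq_add]
      · exact h
      · rw [hp]; simp only [h]; intro hh; exact hrne hh.symm
    · rw [if_pos h, h]
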